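/- The Bing space B is not regular: there exists a point and a closed set not containing it that cannot be separated by disjoint open sets. -/

import Mathlib

/-- A point of the Bing space: a rational pair `(x, y)` with `0 ≤ y`. -/
structure BingPt where
  x : ℚ
  y : ℚ
  hy : 0 ≤ y

/-- The pair of base "intervals" attached to the point `(a,b)`:
rational points `(x,0)` with `|x - (a - b/√3)| < ε` or `|x - (a + b/√3)| < ε`. -/
def wedge (a b : ℚ) (ε : ℝ) : Set BingPt :=
  {z : BingPt | z.y = 0 ∧ (|(z.x : ℝ) - ((a : ℝ) - (b : ℝ) / Real.sqrt 3)| < ε ∨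
    |(z.x : ℝ) - ((a : ℝ) + (b : ℝ) / Real.sqrt 3)| < ε)}

/-- A set `U` is Bing-open if each of its points `(a,b)` admits `ε > 0`
with the corresponding base intervals contained in `U`. -/
def BingOpen (U : Set BingPt) : Prop :=
  ∀ z ∈ U, ∃ ε : ℝ, 0 < ε ∧ wedge z.x z.y ε ⊆ U

/-- The Bing topology. -/
instance : TopologicalSpace BingPt where
  IsOpen := BingOpen
  isOpen_univ := fun _ _ => ⟨1, one_pos, fun _ _ => trivial⟩
  isOpen_inter := by
    intro U V hU hV z hz
    obtain ⟨ε1, hε1, h1⟩ := hU z hz.1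
    obtain ⟨ε2, hε2, h2⟩ := hV z hz.2
    refine ⟨min ε1 ε2, lt_min hε1 hε2, fun w hw => ⟨h1 ⟨hw.1, ?_⟩, h2 ⟨hw.1, ?_⟩⟩⟩
    · exact hw.2.imp (fun h => h.trans_le (min_le_left _ _)) (fun h => h.trans_le (min_le_left _ _))
    · exact hw.2.imp (fun h => h.trans_le (min_le_right _ _)) (fun h => h.trans_le (min_le_right _ _))
  isOpen_sUnion := by
    intro S hS z hz
    obtain ⟨U, hU, hzU⟩ := hz
    obtain ⟨ε, hε, h⟩ := hS U hU z hzU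
    exact ⟨ε, hε, fun w hw => ⟨U, hU, h hw⟩⟩

/-- The Bing space is not regular: some point and closed set not containing it cannot
be separated by disjoint open sets. -/
theorem bing_not_regular :
    ¬ RegularSpace BingPt ∧
    ∃ (z : BingPt) (C : Set BingPt), IsClosed C ∧ z ∉ C ∧
      ¬ ∃ U V : Set BingPt, IsOpen U ∧ IsOpen V ∧ z ∈ U ∧ C ⊆ V ∧ Disjoint U V := by
  have sqrt3_pos : (0:ℝ) < Real.sqrt 3 := Real.sqrt_pos.mpr (by norm_num)
  set z : BingPt := ⟨0, 0, le_refl 0⟩ with hz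
  set C : Set BingPt := {w : BingPt | w.y = 1} with hC
  have hclosed : IsClosed C := by
    rw [← isOpen_compl_iff]
    intro w hw
    refine ⟨1, one_pos, fun v hv => ?_⟩
    simp only [hC, Set.mem_compl_iff, Set.mem_setOf_eq]
    rw [hv.1]; norm_num
  have hznC : z ∉ C := by simp [hz, hC]
  have hmain : ¬ ∃ U V : Set BingPt, IsOpen U ∧ IsOpen V ∧ z ∈ U ∧ C ⊆ V ∧ Disjoint U V := by
    rintro ⟨U, V, hU, hV, hzU, hCV, hd⟩
    obtain ⟨ε, hε, hwU⟩ := hU z hzU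
    -- pick a rational q near 1/√3
    obtain ⟨q, hq⟩ := exists_rat_near ((Real.sqrt 3)⁻¹) (half_pos hε)
    have hp : (⟨q, 1, zero_le_one⟩ : BingPt) ∈ C := rfl
    obtain ⟨δ, hδ, hwV⟩ := hV _ (hCV hp)
    -- pick a rational r near q - 1/√3
    obtain ⟨r, hr⟩ := exists_rat_near ((q:ℝ) - (Real.sqrt 3)⁻¹) (lt_min (half_pos hε) hδ)
    have hr1 : |(q:ℝ) - (Real.sqrt 3)⁻¹ - r| < ε / 2 := hr.trans_le (min_le_left _ _)
    have hr2 : |(q:ℝ) - (Real.sqrt 3)⁻¹ - r| < δ := hr.trans_le (min_le_right _ _)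
    have hrU : (⟨r, 0, le_refl 0⟩ : BingPt) ∈ U := by
      apply hwU
      refine ⟨rfl, Or.inl ?_⟩
      simp only [hz]
      push_cast
      have : (0:ℝ) - 0 / Real.sqrt 3 = 0 := by ring
      rw [this, sub_zero]
      have h1 : |(r:ℝ)| ≤ |(r:ℝ) - ((q:ℝ) - (Real.sqrt 3)⁻¹)| + |(q:ℝ) - (Real.sqrt 3)⁻¹| := by
        calc |(r:ℝ)| = |((r:ℝ) - ((q:ℝ) - (Real.sqrt 3)⁻¹)) + ((q:ℝ) - (Real.sqrt 3)⁻¹)| := by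
              ring_nf
          _ ≤ _ := abs_add_le _ _
      have hq' : |(q:ℝ) - (Real.sqrt 3)⁻¹| < ε / 2 := by rwa [abs_sub_comm]
      have hr1' : |(r:ℝ) - ((q:ℝ) - (Real.sqrt 3)⁻¹)| < ε / 2 := by
        rwa [abs_sub_comm]
      linarith
    have hrV : (⟨r, 0, le_refl 0⟩ : BingPt) ∈ V := by
      apply hwV
      refine ⟨rfl, Or.inl ?_⟩
      simp only
      have h13 : ((1:ℚ):ℝ) / Real.sqrt 3 = (Real.sqrt 3)⁻¹ := by
        push_cast; rw [one_div]
      rw [h13, abs_sub_comm]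
      exact hr2
    exact Set.disjoint_left.mp hd hrU hrV
  refine ⟨?_, z, C, hclosed, hznC, hmain⟩
  intro hreg
  apply hmain
  have hdisj : Disjoint (nhdsSet C) (nhds z) := by
    rw [disjoint_nhdsSet_nhds, hclosed.closure_eq]
    exact hznC
  have hsep : SeparatedNhds C {z} := by
    rw [separatedNhds_iff_disjoint, nhdsSet_singleton]
    exact hdisj
  obtain ⟨V, U, hV, hU, hCV, hzU, hd⟩ := hsep
  exact ⟨U, V, hU, hV, hzU rfl, hCV, hd.symm⟩
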